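/- Let (F_n) be a filtration, let λ_n > 0 be a random variable independent of F_{n-1}, and set F_{n-1}^+ = σ(F_{n-1}, λ_n). Let e_{n-1} > 0 and e_{n-1}^{(k)} ≥ 0 be F_{n-1}-measurable with e_{n-1}^{(k)} ≤ e_{n-1}, and suppose Δ_n^{(k)} | F_{n-1}^+ ~ Poisson(λ_n · e_{n-1}^{(k)}/e_{n-1}) and Δ_n | F_{n-1}^+ ~ Poisson(λ_n) with Δ_n - Δ_n^{(k)} independent of Δ_n^{(k)} given F_{n-1}^+. If e_n = e_{n-1} + Δ_n and e_n^{(k)} = e_{n-1}^{(k)} + Δ_n^{(k)}, then E[e_n^{(k)}/e_n | F_{n-1}] = e_{n-1}^{(k)}/e_{n-1}; hence (e_n^{(k)}/e_n) is a nonnegative martingale and converges almost surely. -/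

import Mathlib

open MeasureTheory ProbabilityTheory Filter Real

set_option maxHeartbeats 1000000

private lemma binom_weight_sum (s : ℕ) (p q : ℝ) (hpq : p + q = 1) (a : ℝ) :
    ∑ k ∈ Finset.range (s + 1), (a + k) * ((s.choose k : ℝ) * p ^ k * q ^ (s - k))
      = a + s * p := by
  have hbin : ∀ t : ℕ, ∑ k ∈ Finset.range (t + 1), (t.choose k : ℝ) * p ^ k * q ^ (t - k) = 1 := by
    intro t
    have h := add_pow p q t
    rw [hpq, one_pow] at h
    calc ∑ k ∈ Finset.range (t + 1), (t.choose k : ℝ) * p ^ k * q ^ (t - k)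
        = ∑ k ∈ Finset.range (t + 1), p ^ k * q ^ (t - k) * (t.choose k : ℝ) :=
          Finset.sum_congr rfl fun k _ => by ring
      _ = 1 := h.symm
  have hmean : ∑ k ∈ Finset.range (s + 1), (k : ℝ) * ((s.choose k : ℝ) * p ^ k * q ^ (s - k))
      = s * p := by
    cases s with
    | zero => simp
    | succ s =>
      rw [Finset.sum_range_succ']
      simp only [Nat.cast_zero, zero_mul, add_zero]
      have hstep : ∀ i ∈ Finset.range (s + 1),
          ((i + 1 : ℕ) : ℝ) * (((s + 1).choose (i + 1) : ℝ) * p ^ (i + 1) * q ^ (s + 1 - (i + 1)))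
            = ((s : ℝ) + 1) * p * ((s.choose i : ℝ) * p ^ i * q ^ (s - i)) := by
        intro i _
        have h' : ((s : ℝ) + 1) * (s.choose i : ℝ)
            = ((s + 1).choose (i + 1) : ℝ) * ((i : ℝ) + 1) := by
          exact_mod_cast congrArg (Nat.cast : ℕ → ℝ) (Nat.add_one_mul_choose_eq s i)
        have hsub : s + 1 - (i + 1) = s - i := by omega
        rw [hsub]
        push_cast
        linear_combination (-(p ^ (i + 1) * q ^ (s - i))) * h'
      rw [Finset.sum_congr rfl hstep, ← Finset.mul_sum, hbin s]
      push_cast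
      ring
  calc ∑ k ∈ Finset.range (s + 1), (a + k) * ((s.choose k : ℝ) * p ^ k * q ^ (s - k))
      = ∑ k ∈ Finset.range (s + 1), (a * ((s.choose k : ℝ) * p ^ k * q ^ (s - k))
          + (k : ℝ) * ((s.choose k : ℝ) * p ^ k * q ^ (s - k))) :=
        Finset.sum_congr rfl fun k _ => by ring
    _ = a + s * p := by
        rw [Finset.sum_add_distrib, ← Finset.mul_sum, hbin s, hmean, mul_one]

private lemma tsum_pow_div_factorial' (x : ℝ) :
    ∑' n : ℕ, x ^ n / n.factorial = Real.exp x := by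
  rw [Real.exp_eq_exp_ℝ, NormedSpace.exp_eq_tsum_div]

private lemma tsum_pois (x : ℝ) :
    ∑' n : ℕ, Real.exp (-x) * x ^ n / n.factorial = 1 := by
  have h : (fun n : ℕ => Real.exp (-x) * x ^ n / n.factorial)
      = fun n : ℕ => Real.exp (-x) * (x ^ n / n.factorial) := by
    funext n; ring
  rw [h, tsum_mul_left, tsum_pow_div_factorial', ← Real.exp_add]
  simp

private lemma summable_pois (x : ℝ) :
    Summable (fun n : ℕ => Real.exp (-x) * x ^ n / n.factorial) := by
  have h : (fun n : ℕ => Real.exp (-x) * x ^ n / n.factorial)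
      = fun n : ℕ => Real.exp (-x) * (x ^ n / n.factorial) := by
    funext n; ring
  rw [h]
  exact (Real.summable_pow_div_factorial x).mul_left _

private lemma summable_pois_prod (x y : ℝ) (hx : 0 ≤ x) (hy : 0 ≤ y) :
    Summable (fun ij : ℕ × ℕ =>
      (Real.exp (-x) * x ^ ij.1 / ij.1.factorial) *
        (Real.exp (-y) * y ^ ij.2 / ij.2.factorial)) :=
  (summable_pois x).mul_of_nonneg (summable_pois y)
    (fun i => by positivity) (fun j => by positivity)

private lemma tsum_pois_prod (x y : ℝ) (hx : 0 ≤ x) (hy : 0 ≤ y) :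
    ∑' ij : ℕ × ℕ,
      (Real.exp (-x) * x ^ ij.1 / ij.1.factorial) *
        (Real.exp (-y) * y ^ ij.2 / ij.2.factorial) = 1 := by
  rw [← Summable.tsum_mul_tsum (summable_pois x) (summable_pois y) (summable_pois_prod x y hx hy),
    tsum_pois, tsum_pois, mul_one]

private lemma key_summand (a c L : ℝ) (hc : 0 < c) (n k : ℕ) (hk : k ≤ n) :
    ((a + k) / (c + k + ((n - k : ℕ) : ℝ))) *
      ((Real.exp (-(L * (a / c))) * (L * (a / c)) ^ k / k.factorial) *
       (Real.exp (-(L * (1 - a / c))) * (L * (1 - a / c)) ^ (n - k) / (n - k).factorial))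
    = ((a + k) * ((n.choose k : ℝ) * (a / c) ^ k * (1 - a / c) ^ (n - k)))
        * (Real.exp (-L) * L ^ n / n.factorial) / (c + n) := by
  have hcast : ((n - k : ℕ) : ℝ) = (n : ℝ) - k := Nat.cast_sub hk
  have hexp : Real.exp (-(L * (a / c))) * Real.exp (-(L * (1 - a / c))) = Real.exp (-L) := by
    rw [← Real.exp_add]; congr 1; ring
  have hpow1 : (L * (a / c)) ^ k = L ^ k * (a / c) ^ k := mul_pow _ _ _
  have hpow2 : (L * (1 - a / c)) ^ (n - k) = L ^ (n - k) * (1 - a / c) ^ (n - k) := mul_pow _ _ _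
  have hLpow : L ^ k * L ^ (n - k) = L ^ n := by
    rw [← pow_add]; congr 1; omega
  have hchoose : (n.choose k : ℝ) = (n.factorial : ℝ) / (k.factorial * (n - k).factorial) :=
    Nat.cast_choose ℝ hk
  have hden : c + (k : ℝ) + ((n : ℝ) - k) = c + n := by ring
  have hcn : c + (n : ℝ) ≠ 0 := by positivity
  have hkf : (k.factorial : ℝ) ≠ 0 := by positivity
  have hnkf : ((n - k).factorial : ℝ) ≠ 0 := by positivity
  have hnf : (n.factorial : ℝ) ≠ 0 := by positivity
  have hc0 : c ≠ 0 := hc.ne'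
  rw [hcast, hden, hpow1, hpow2, hchoose, ← hexp, ← hLpow]
  field_simp

private lemma key_identity (a c L : ℝ) (ha : 0 ≤ a) (hc : 0 < c) (hac : a ≤ c) (hL : 0 ≤ L) :
    ∑' ij : ℕ × ℕ,
      ((a + ij.1) / (c + ij.1 + ij.2)) *
        ((Real.exp (-(L * (a / c))) * (L * (a / c)) ^ ij.1 / ij.1.factorial) *
         (Real.exp (-(L * (1 - a / c))) * (L * (1 - a / c)) ^ ij.2 / ij.2.factorial))
      = a / c := by
  set F : ℕ × ℕ → ℝ := fun ij =>
      ((a + ij.1) / (c + ij.1 + ij.2)) *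
        ((Real.exp (-(L * (a / c))) * (L * (a / c)) ^ ij.1 / ij.1.factorial) *
         (Real.exp (-(L * (1 - a / c))) * (L * (1 - a / c)) ^ ij.2 / ij.2.factorial)) with hF
  have hp : 0 ≤ a / c := div_nonneg ha hc.le
  have hq : 0 ≤ 1 - a / c := by
    rw [sub_nonneg]
    exact (div_le_one hc).mpr hac
  have hF0 : ∀ ij, 0 ≤ F ij := by
    rintro ⟨i, j⟩
    apply mul_nonneg
    · apply div_nonneg (by positivity) (by positivity)
    · apply mul_nonneg
      · apply div_nonneg _ (by positivity)
        exact mul_nonneg (Real.exp_pos _).le (pow_nonneg (mul_nonneg hL hp) _)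
      · apply div_nonneg _ (by positivity)
        exact mul_nonneg (Real.exp_pos _).le (pow_nonneg (mul_nonneg hL hq) _)
  have hpq : a / c + (1 - a / c) = 1 := by ring
  have hinner : ∀ n : ℕ, ∑ kl ∈ Finset.HasAntidiagonal.antidiagonal n, F kl
      = (a / c) * (Real.exp (-L) * L ^ n / n.factorial) := by
    intro n
    rw [Finset.Nat.sum_antidiagonal_eq_sum_range_succ_mk]
    have hc' : ∀ k ∈ Finset.range (n + 1), F (k, n - k)
        = ((a + k) * ((n.choose k : ℝ) * (a / c) ^ k * (1 - a / c) ^ (n - k)))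
            * (Real.exp (-L) * L ^ n / n.factorial) / (c + n) := by
      intro k hk
      exact key_summand a c L hc n k (Nat.lt_succ_iff.mp (Finset.mem_range.mp hk))
    rw [Finset.sum_congr rfl hc', ← Finset.sum_div, ← Finset.sum_mul,
      binom_weight_sum n (a / c) (1 - a / c) hpq a]
    have h1 : a + (n : ℝ) * (a / c) = (a / c) * (c + n) := by
      field_simp
    have hcn : c + (n : ℝ) ≠ 0 := by positivity
    rw [h1]
    field_simp
  have hfib : ∀ n : ℕ, Summable fun p : (Finset.HasAntidiagonal.antidiagonal n : Finset (ℕ × ℕ)) => F ↑p :=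
    fun n => (hasSum_fintype _).summable
  have houter0 : (fun n : ℕ => ∑' p : (Finset.HasAntidiagonal.antidiagonal n : Finset (ℕ × ℕ)), F ↑p)
      = fun n : ℕ => (a / c) * (Real.exp (-L) * L ^ n / n.factorial) := by
    funext n
    rw [Finset.tsum_subtype, hinner n]
  have houter : Summable
      (fun n : ℕ => ∑' p : (Finset.HasAntidiagonal.antidiagonal n : Finset (ℕ × ℕ)), F ↑p) := by
    rw [houter0]
    apply Summable.congr (((Real.summable_pow_div_factorial L).mul_left
      (Real.exp (-L))).mul_left (a / c))
    intro n
    rw [mul_div_assoc]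
  have hsigma : Summable (fun x : Σ n : ℕ, (Finset.HasAntidiagonal.antidiagonal n : Finset (ℕ × ℕ)) =>
      F ((Finset.HasAntidiagonal.sigmaAntidiagonalEquivProd (A := ℕ)) x)) := by
    apply (summable_sigma_of_nonneg _).mpr ⟨hfib, houter⟩
    intro x
    exact hF0 _
  calc ∑' ij : ℕ × ℕ, F ij
      = ∑' x : Σ n : ℕ, (Finset.HasAntidiagonal.antidiagonal n : Finset (ℕ × ℕ)),
          F ((Finset.HasAntidiagonal.sigmaAntidiagonalEquivProd (A := ℕ)) x) :=
        ((Finset.HasAntidiagonal.sigmaAntidiagonalEquivProd (A := ℕ)).tsum_eq F).symm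
    _ = ∑' (n : ℕ) (p : (Finset.HasAntidiagonal.antidiagonal n : Finset (ℕ × ℕ))), F ↑p :=
        Summable.tsum_sigma' hfib hsigma
    _ = ∑' n : ℕ, (a / c) * (Real.exp (-L) * L ^ n / n.factorial) := by rw [houter0]
    _ = a / c := by
        rw [tsum_mul_left, tsum_pois L, mul_one]

/-- Edge-type ratio martingale in the model of independent edges: at step `n+1` the
number of new type-`k` edges `Δ^{(k)}_{n+1}` and the number of other new edges
`Δ_{n+1} - Δ^{(k)}_{n+1}` are, conditionally on `𝒢_{n+1} = σ(ℱ_n, λ_{n+1})`,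
independent Poisson with parameters `λ_{n+1}·e_n^{(k)}/e_n` and
`λ_{n+1}·(1 - e_n^{(k)}/e_n)`. Then `E[e_{n+1}^{(k)}/e_{n+1} | ℱ_n] = e_n^{(k)}/e_n`,
so the proportion of type-`k` edges is a nonnegative martingale and converges a.s. -/
theorem edge_type_ratio_martingale_indep_edges
    {Ω : Type*} {m0 : MeasurableSpace Ω} (μ : Measure Ω) [IsProbabilityMeasure μ]
    (ℱ : Filtration ℕ m0) (𝒢 : ℕ → MeasurableSpace Ω)
    (h𝒢₁ : ∀ n, ℱ n ≤ 𝒢 (n + 1)) (h𝒢₂ : ∀ n, 𝒢 (n + 1) ≤ ℱ (n + 1))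
    (lam : ℕ → Ω → ℝ) (Δ Δk : ℕ → Ω → ℕ) (e ek : ℕ → Ω → ℕ)
    (hlammeas : ∀ n, Measurable[𝒢 (n + 1)] (lam (n + 1)))
    (hlampos : ∀ n ω, 0 < lam (n + 1) ω)
    (hlamindep : ∀ n, Indep (MeasurableSpace.comap (lam (n + 1)) inferInstance) (ℱ n) μ)
    (headapted : ∀ n, Measurable[ℱ n] (e n)) (hekadapted : ∀ n, Measurable[ℱ n] (ek n))
    (hepos : ∀ n ω, 0 < e n ω) (hle : ∀ n ω, ek n ω ≤ e n ω)
    (hΔle : ∀ n ω, Δk (n + 1) ω ≤ Δ (n + 1) ω)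
    (hestep : ∀ n ω, e (n + 1) ω = e n ω + Δ (n + 1) ω)
    (hekstep : ∀ n ω, ek (n + 1) ω = ek n ω + Δk (n + 1) ω)
    (hpois : ∀ n, ∀ i j : ℕ,
      (μ⟦{ω | Δk (n + 1) ω = i ∧ Δ (n + 1) ω - Δk (n + 1) ω = j} | 𝒢 (n + 1)⟧)
        =ᵐ[μ] fun ω =>
          (Real.exp (-(lam (n + 1) ω * ((ek n ω : ℝ) / (e n ω : ℝ)))) *
            (lam (n + 1) ω * ((ek n ω : ℝ) / (e n ω : ℝ))) ^ i / (i.factorial : ℝ)) *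
          (Real.exp (-(lam (n + 1) ω * (1 - (ek n ω : ℝ) / (e n ω : ℝ)))) *
            (lam (n + 1) ω * (1 - (ek n ω : ℝ) / (e n ω : ℝ))) ^ j / (j.factorial : ℝ))) :
    (∀ n, μ[fun ω => (ek (n + 1) ω : ℝ) / (e (n + 1) ω : ℝ) | ℱ n]
        =ᵐ[μ] fun ω => (ek n ω : ℝ) / (e n ω : ℝ)) ∧
    Martingale (fun n ω => (ek n ω : ℝ) / (e n ω : ℝ)) ℱ μ ∧
    ∃ ζ : Ω → ℝ, ∀ᵐ ω ∂μ,
      Tendsto (fun n => (ek n ω : ℝ) / (e n ω : ℝ)) atTop (nhds (ζ ω)) := by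
  classical
  have hepos' : ∀ n ω, (0 : ℝ) < (e n ω : ℝ) := fun n ω => by exact_mod_cast hepos n ω
  have h0 : ∀ n ω, 0 ≤ (ek n ω : ℝ) / (e n ω : ℝ) := fun n ω => by positivity
  have h1 : ∀ n ω, (ek n ω : ℝ) / (e n ω : ℝ) ≤ 1 := fun n ω => by
    rw [div_le_one (hepos' n ω)]
    exact_mod_cast hle n ω
  have hratio_meas : ∀ n, Measurable[ℱ n] fun ω => (ek n ω : ℝ) / (e n ω : ℝ) := fun n =>
    (measurable_from_top.comp (hekadapted n)).div (measurable_from_top.comp (headapted n))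
  have hint : ∀ n, Integrable (fun ω => (ek n ω : ℝ) / (e n ω : ℝ)) μ := by
    intro n
    refine (integrable_const (1 : ℝ)).mono'
      (((hratio_meas n).mono (ℱ.le n) le_rfl).aestronglyMeasurable)
      (Eventually.of_forall fun ω => ?_)
    rw [Real.norm_eq_abs, abs_of_nonneg (h0 n ω)]
    exact h1 n ω
  -- the key one-step identity
  have hkey : ∀ n, μ[fun ω => (ek (n + 1) ω : ℝ) / (e (n + 1) ω : ℝ) | ℱ n]
      =ᵐ[μ] fun ω => (ek n ω : ℝ) / (e n ω : ℝ) := by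
    intro n
    have hm : 𝒢 (n + 1) ≤ m0 := (h𝒢₂ n).trans (ℱ.le (n + 1))
    have hFm : ℱ n ≤ 𝒢 (n + 1) := h𝒢₁ n
    haveI : SigmaFinite (μ.trim hm) := inferInstance
    -- measurability of increments
    have hΔkmeas : Measurable (Δk (n + 1)) := by
      have hh : Δk (n + 1) = fun ω => ek (n + 1) ω - ek n ω := by
        funext ω; rw [hekstep n ω]; omega
      rw [hh]
      exact ((hekadapted (n + 1)).mono (ℱ.le (n + 1)) le_rfl).sub
        ((hekadapted n).mono (ℱ.le n) le_rfl)
    have hΔmeas : Measurable (Δ (n + 1)) := by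
      have hh : Δ (n + 1) = fun ω => e (n + 1) ω - e n ω := by
        funext ω; rw [hestep n ω]; omega
      rw [hh]
      exact ((headapted (n + 1)).mono (ℱ.le (n + 1)) le_rfl).sub
        ((headapted n).mono (ℱ.le n) le_rfl)
    set A : ℕ × ℕ → Set Ω := fun ij =>
      {ω | Δk (n + 1) ω = ij.1 ∧ Δ (n + 1) ω - Δk (n + 1) ω = ij.2} with hA_def
    have hAmeas : ∀ ij, MeasurableSet (A ij) := by
      rintro ⟨i, j⟩
      exact (hΔkmeas (measurableSet_singleton i)).inter
        ((hΔmeas.sub hΔkmeas) (measurableSet_singleton j))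
    set g : ℕ × ℕ → Ω → ℝ := fun ij ω =>
      ((ek n ω : ℝ) + ij.1) / ((e n ω : ℝ) + ij.1 + ij.2) with hg_def
    set P : ℕ × ℕ → Ω → ℝ := fun ij ω =>
      (Real.exp (-(lam (n + 1) ω * ((ek n ω : ℝ) / (e n ω : ℝ)))) *
        (lam (n + 1) ω * ((ek n ω : ℝ) / (e n ω : ℝ))) ^ ij.1 / (ij.1.factorial : ℝ)) *
      (Real.exp (-(lam (n + 1) ω * (1 - (ek n ω : ℝ) / (e n ω : ℝ)))) *
        (lam (n + 1) ω * (1 - (ek n ω : ℝ) / (e n ω : ℝ))) ^ ij.2 / (ij.2.factorial : ℝ))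
      with hP_def
    have hPcond : ∀ ij : ℕ × ℕ,
        (μ[(A ij).indicator (fun _ => (1 : ℝ)) | 𝒢 (n + 1)]) =ᵐ[μ] P ij := fun ij =>
      hpois n ij.1 ij.2
    -- m-measurability
    have hekm : Measurable[𝒢 (n + 1)] fun ω => (ek n ω : ℝ) :=
      (measurable_from_top.comp (hekadapted n)).mono hFm le_rfl
    have heem : Measurable[𝒢 (n + 1)] fun ω => (e n ω : ℝ) :=
      (measurable_from_top.comp (headapted n)).mono hFm le_rfl
    have hlm : Measurable[𝒢 (n + 1)] (lam (n + 1)) := hlammeas n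
    have hratm : Measurable[𝒢 (n + 1)] fun ω => (ek n ω : ℝ) / (e n ω : ℝ) := hekm.div heem
    have hgm : ∀ ij, Measurable[𝒢 (n + 1)] (g ij) := by
      rintro ⟨i, j⟩
      exact (hekm.add measurable_const).div ((heem.add measurable_const).add measurable_const)
    have hPm : ∀ ij, Measurable[𝒢 (n + 1)] (P ij) := by
      rintro ⟨i, j⟩
      refine Measurable.mul ?_ ?_
      · exact ((Real.measurable_exp.comp (hlm.mul hratm).neg).mul
          ((hlm.mul hratm).pow_const i)).div_const _
      · exact ((Real.measurable_exp.comp (hlm.mul (measurable_const.sub hratm)).neg).mul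
          ((hlm.mul (measurable_const.sub hratm)).pow_const j)).div_const _
    -- bounds
    have hg0 : ∀ ij (ω : Ω), 0 ≤ g ij ω := by
      rintro ⟨i, j⟩ ω
      have := hepos' n ω
      apply div_nonneg <;> positivity
    have hg1 : ∀ ij (ω : Ω), g ij ω ≤ 1 := by
      rintro ⟨i, j⟩ ω
      have he0 := hepos' n ω
      rw [div_le_one (by positivity)]
      have hlee : (ek n ω : ℝ) ≤ (e n ω : ℝ) := by exact_mod_cast hle n ω
      have hj : (0 : ℝ) ≤ (j : ℝ) := by positivity
      linarith
    have hP0 : ∀ ij (ω : Ω), 0 ≤ P ij ω := by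
      rintro ⟨i, j⟩ ω
      have hlam0 := (hlampos n ω).le
      have hp0 := h0 n ω
      have hp1 := h1 n ω
      have hq : 0 ≤ 1 - (ek n ω : ℝ) / (e n ω : ℝ) := by linarith
      apply mul_nonneg
      · apply div_nonneg _ (by positivity)
        exact mul_nonneg (Real.exp_pos _).le (pow_nonneg (mul_nonneg hlam0 hp0) _)
      · apply div_nonneg _ (by positivity)
        exact mul_nonneg (Real.exp_pos _).le (pow_nonneg (mul_nonneg hlam0 hq) _)
    have hPsummable : ∀ ω, Summable fun ij : ℕ × ℕ => P ij ω := by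
      intro ω
      have hlam0 := (hlampos n ω).le
      have hp0 := h0 n ω
      have hp1 := h1 n ω
      exact summable_pois_prod _ _ (mul_nonneg hlam0 hp0) (mul_nonneg hlam0 (by linarith))
    have hPtsum : ∀ ω, ∑' ij : ℕ × ℕ, P ij ω = 1 := by
      intro ω
      have hlam0 := (hlampos n ω).le
      have hp0 := h0 n ω
      have hp1 := h1 n ω
      exact tsum_pois_prod _ _ (mul_nonneg hlam0 hp0) (mul_nonneg hlam0 (by linarith))
    have hgPtsum : ∀ ω : Ω, ∑' ij : ℕ × ℕ, g ij ω * P ij ω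
        = (ek n ω : ℝ) / (e n ω : ℝ) := by
      intro ω
      have hleω : (ek n ω : ℝ) ≤ (e n ω : ℝ) := by exact_mod_cast hle n ω
      exact key_identity (ek n ω : ℝ) (e n ω : ℝ) (lam (n + 1) ω)
        (by positivity) (hepos' n ω) hleω (hlampos n ω).le
    -- partition facts
    have hApart : ∀ ω : Ω, ω ∈ A (Δk (n + 1) ω, Δ (n + 1) ω - Δk (n + 1) ω) :=
      fun ω => ⟨rfl, rfl⟩
    have hgA : ∀ ij (ω : Ω), ω ∈ A ij →
        (ek (n + 1) ω : ℝ) / (e (n + 1) ω : ℝ) = g ij ω := by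
      rintro ⟨i, j⟩ ω ⟨hω1, hω2⟩
      simp only [hA_def, Set.mem_setOf_eq] at hω1 hω2
      have hek1 : ek (n + 1) ω = ek n ω + i := by rw [hekstep n ω, hω1]
      have he1 : e (n + 1) ω = e n ω + i + j := by
        rw [hestep n ω]
        have := hΔle n ω
        omega
      rw [hek1, he1]
      simp only [hg_def]
      push_cast
      ring
    -- the set-integral equality
    have hseteq : ∀ s, MeasurableSet[𝒢 (n + 1)] s → μ s < ⊤ →
        ∫ ω in s, (ek n ω : ℝ) / (e n ω : ℝ) ∂μ
          = ∫ ω in s, (ek (n + 1) ω : ℝ) / (e (n + 1) ω : ℝ) ∂μ := by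
      intro s hs _
      have hs0 : MeasurableSet s := hm s hs
      have hunion : s = ⋃ ij : ℕ × ℕ, s ∩ A ij := by
        ext ω
        simp only [Set.mem_iUnion, Set.mem_inter_iff]
        constructor
        · intro hω; exact ⟨_, hω, hApart ω⟩
        · rintro ⟨ij, hω, _⟩; exact hω
      have hdisj : Pairwise (Function.onFun Disjoint fun ij : ℕ × ℕ => s ∩ A ij) := by
        intro ij kl hne
        rw [Function.onFun, Set.disjoint_left]
        rintro ω ⟨-, hω1⟩ ⟨-, hω2⟩
        apply hne
        obtain ⟨h11, h12⟩ := hω1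
        obtain ⟨h21, h22⟩ := hω2
        ext
        · rw [← h11, ← h21]
        · rw [← h12, ← h22]
      have hconds : ∀ ij : ℕ × ℕ,
          ∫ ω in s ∩ A ij, (ek (n + 1) ω : ℝ) / (e (n + 1) ω : ℝ) ∂μ
            = ∫ ω in s, g ij ω * P ij ω ∂μ := by
        intro ij
        have hind_int : Integrable ((A ij).indicator (fun _ => (1 : ℝ))) μ :=
          (integrable_const (1 : ℝ)).indicator (hAmeas ij)
        have hmul_int : Integrable
            (fun ω => g ij ω * (A ij).indicator (fun _ => (1 : ℝ)) ω) μ := by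
          refine (integrable_const (1 : ℝ)).mono'
            ((((hgm ij).mono hm le_rfl).mul
              (measurable_const.indicator (hAmeas ij))).aestronglyMeasurable)
            (Eventually.of_forall fun ω => ?_)
          rw [Real.norm_eq_abs, abs_mul]
          have h01 : |g ij ω| ≤ 1 := by
            rw [abs_of_nonneg (hg0 ij ω)]; exact hg1 ij ω
          have h02 : |(A ij).indicator (fun _ => (1 : ℝ)) ω| ≤ 1 := by
            by_cases hω : ω ∈ A ij <;>
              simp [Set.indicator_of_mem, Set.indicator_of_notMem, hω]
          calc |g ij ω| * |(A ij).indicator (fun _ => (1 : ℝ)) ω|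
              ≤ 1 * 1 := mul_le_mul h01 h02 (abs_nonneg _) zero_le_one
            _ = 1 := one_mul 1
        have hmul_cond : μ[fun ω => g ij ω * (A ij).indicator (fun _ => (1 : ℝ)) ω | 𝒢 (n + 1)]
            =ᵐ[μ] fun ω => g ij ω * (μ[(A ij).indicator (fun _ => (1 : ℝ)) | 𝒢 (n + 1)]) ω := by
          exact condExp_mul_of_stronglyMeasurable_left ((hgm ij).stronglyMeasurable)
            hmul_int hind_int
        calc ∫ ω in s ∩ A ij, (ek (n + 1) ω : ℝ) / (e (n + 1) ω : ℝ) ∂μ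
            = ∫ ω in s ∩ A ij, g ij ω ∂μ :=
              setIntegral_congr_fun (hs0.inter (hAmeas ij)) fun ω hω => hgA ij ω hω.2
          _ = ∫ ω in s, (A ij).indicator (g ij) ω ∂μ :=
              (setIntegral_indicator (hAmeas ij)).symm
          _ = ∫ ω in s, g ij ω * (A ij).indicator (fun _ => (1 : ℝ)) ω ∂μ := by
              refine setIntegral_congr_fun hs0 fun ω _ => ?_
              by_cases hω : ω ∈ A ij <;>
                simp [Set.indicator_of_mem, Set.indicator_of_notMem, hω]
          _ = ∫ ω in s, (μ[fun ω => g ij ω * (A ij).indicator (fun _ => (1 : ℝ)) ω | 𝒢 (n + 1)]) ω ∂μ :=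
              (setIntegral_condExp hm hmul_int hs).symm
          _ = ∫ ω in s, g ij ω * P ij ω ∂μ := by
              refine integral_congr_ae (ae_restrict_of_ae ?_)
              filter_upwards [hmul_cond, hPcond ij] with ω hω1 hω2
              rw [hω1, hω2]
      have hswap : ∫ ω in s, (∑' ij : ℕ × ℕ, g ij ω * P ij ω) ∂μ
          = ∑' ij : ℕ × ℕ, ∫ ω in s, g ij ω * P ij ω ∂μ := by
        refine integral_tsum (fun ij =>
          (((hgm ij).mono hm le_rfl).mul ((hPm ij).mono hm le_rfl)).aestronglyMeasurable) ?_
        have hbound : ∀ ij : ℕ × ℕ,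
            ∫⁻ ω in s, ‖g ij ω * P ij ω‖ₑ ∂μ ≤ ∫⁻ ω in s, ENNReal.ofReal (P ij ω) ∂μ := by
          intro ij
          refine lintegral_mono fun ω => ?_
          rw [← ofReal_norm]
          refine ENNReal.ofReal_le_ofReal ?_
          rw [norm_mul, Real.norm_eq_abs, Real.norm_eq_abs, abs_of_nonneg (hP0 ij ω),
            abs_of_nonneg (hg0 ij ω)]
          calc g ij ω * P ij ω ≤ 1 * P ij ω :=
              mul_le_mul_of_nonneg_right (hg1 ij ω) (hP0 ij ω)
            _ = P ij ω := one_mul _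
        have hPae : ∀ ij : ℕ × ℕ,
            AEMeasurable (fun ω => ENNReal.ofReal (P ij ω)) (μ.restrict s) :=
          fun ij => (ENNReal.measurable_ofReal.comp
            ((hPm ij).mono hm le_rfl)).aemeasurable
        refine ne_of_lt (lt_of_le_of_lt (ENNReal.tsum_le_tsum hbound) ?_)
        rw [← lintegral_tsum hPae]
        have hone : ∫⁻ ω in s, (∑' ij : ℕ × ℕ, ENNReal.ofReal (P ij ω)) ∂μ
            = ∫⁻ ω in s, 1 ∂μ := by
          refine lintegral_congr fun ω => ?_
          rw [← ENNReal.ofReal_tsum_of_nonneg (fun ij => hP0 ij ω) (hPsummable ω),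
            hPtsum ω, ENNReal.ofReal_one]
        rw [hone]
        simp only [lintegral_one, Measure.restrict_apply_univ]
        exact measure_lt_top μ s
      calc ∫ ω in s, (ek n ω : ℝ) / (e n ω : ℝ) ∂μ
          = ∫ ω in s, (∑' ij : ℕ × ℕ, g ij ω * P ij ω) ∂μ :=
            integral_congr_ae (Eventually.of_forall fun ω => (hgPtsum ω).symm)
        _ = ∑' ij : ℕ × ℕ, ∫ ω in s, g ij ω * P ij ω ∂μ := hswap
        _ = ∑' ij : ℕ × ℕ, ∫ ω in s ∩ A ij, (ek (n + 1) ω : ℝ) / (e (n + 1) ω : ℝ) ∂μ :=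
            tsum_congr fun ij => (hconds ij).symm
        _ = ∫ ω in ⋃ ij : ℕ × ℕ, s ∩ A ij, (ek (n + 1) ω : ℝ) / (e (n + 1) ω : ℝ) ∂μ :=
            (integral_iUnion (fun ij => hs0.inter (hAmeas ij)) hdisj
              (by rw [← hunion]; exact (hint (n + 1)).integrableOn)).symm
        _ = ∫ ω in s, (ek (n + 1) ω : ℝ) / (e (n + 1) ω : ℝ) ∂μ := by rw [← hunion]
    -- uniqueness of conditional expectation
    have hcondm : (fun ω => (ek n ω : ℝ) / (e n ω : ℝ))
        =ᵐ[μ] μ[fun ω => (ek (n + 1) ω : ℝ) / (e (n + 1) ω : ℝ) | 𝒢 (n + 1)] :=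
      ae_eq_condExp_of_forall_setIntegral_eq hm (hint (n + 1))
        (fun s _ _ => (hint n).integrableOn) hseteq
        (StronglyMeasurable.aestronglyMeasurable
          (((hratio_meas n).mono hFm le_rfl).stronglyMeasurable))
    -- tower property
    have htower : μ[fun ω => (ek (n + 1) ω : ℝ) / (e (n + 1) ω : ℝ) | ℱ n]
        =ᵐ[μ] μ[μ[fun ω => (ek (n + 1) ω : ℝ) / (e (n + 1) ω : ℝ) | 𝒢 (n + 1)] | ℱ n] :=
      (condExp_condExp_of_le hFm hm).symm
    have hfinal : μ[μ[fun ω => (ek (n + 1) ω : ℝ) / (e (n + 1) ω : ℝ) | 𝒢 (n + 1)] | ℱ n]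
        =ᵐ[μ] μ[fun ω => (ek n ω : ℝ) / (e n ω : ℝ) | ℱ n] :=
      condExp_congr_ae hcondm.symm
    have hlast : μ[fun ω => (ek n ω : ℝ) / (e n ω : ℝ) | ℱ n]
        = fun ω => (ek n ω : ℝ) / (e n ω : ℝ) :=
      condExp_of_stronglyMeasurable (ℱ.le n) ((hratio_meas n).stronglyMeasurable) (hint n)
    exact (htower.trans hfinal).trans (by rw [hlast])
  -- martingale
  have hmart : Martingale (fun n ω => (ek n ω : ℝ) / (e n ω : ℝ)) ℱ μ := by
    refine ⟨fun n => (hratio_meas n).stronglyMeasurable, ?_⟩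
    intro i j hij
    induction j with
    | zero =>
      have hi0 : i = 0 := Nat.le_zero.mp hij
      subst hi0
      rw [condExp_of_stronglyMeasurable (ℱ.le 0)
        ((hratio_meas 0).stronglyMeasurable) (hint 0)]
    | succ j ih =>
      rcases Nat.lt_succ_iff_lt_or_eq.mp (Nat.lt_succ_of_le hij) with hij' | hij'
      · have hij'' : i ≤ j := Nat.lt_succ_iff.mp hij'
        calc μ[fun ω => (ek (j + 1) ω : ℝ) / (e (j + 1) ω : ℝ) | ℱ i]
            =ᵐ[μ] μ[μ[fun ω => (ek (j + 1) ω : ℝ) / (e (j + 1) ω : ℝ) | ℱ j] | ℱ i] :=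
              (condExp_condExp_of_le (ℱ.mono hij'') (ℱ.le j)).symm
          _ =ᵐ[μ] μ[fun ω => (ek j ω : ℝ) / (e j ω : ℝ) | ℱ i] := condExp_congr_ae (hkey j)
          _ =ᵐ[μ] fun ω => (ek i ω : ℝ) / (e i ω : ℝ) := ih hij''
      · subst hij'
        rw [condExp_of_stronglyMeasurable (ℱ.le _)
          ((hratio_meas _).stronglyMeasurable) (hint _)]
  refine ⟨hkey, hmart, ?_⟩
  have hbdd : ∀ n, eLpNorm (fun ω => (ek n ω : ℝ) / (e n ω : ℝ)) 1 μ ≤ ((1 : NNReal) : ENNReal) := by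
    intro n
    have hb := eLpNorm_le_of_ae_bound (p := (1 : ENNReal)) (μ := μ) (C := 1)
      (f := fun ω => (ek n ω : ℝ) / (e n ω : ℝ))
      (Eventually.of_forall fun ω => by
        rw [Real.norm_eq_abs, abs_of_nonneg (h0 n ω)]; exact h1 n ω)
    simpa using hb
  exact ⟨ℱ.limitProcess (fun n ω => (ek n ω : ℝ) / (e n ω : ℝ)) μ,
    hmart.submartingale.ae_tendsto_limitProcess hbdd⟩
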